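/- arXiv:1005.1210 — 2 statements merged into one kernel-verified Lean document; each statement's English description precedes it below -/
import Mathlib

section
/- Let 1/2 < α ≤ 1, δ > 0, ε ≥ 0, and let N be an odd positive integer with N^{2α−1} > 32/δ². Let A ⊆ {0, 1, …, N−1} with |A| = δ·N^α, and let M_A = A ∩ [N/3, 2N/3) satisfy |M_A| ≥ (δ/4)·N^α. Suppose that the discrete Fourier coefficients of the characteristic function of A satisfy |χ̂_A(k)| ≤ (δ²/32)·N^{2α−2−ε} for every k with 1 ≤ k ≤ N−1. Then A contains a nontrivial 3-term arithmetic progression in ℤ: there exist x, y, z ∈ A, not all equal, with x + y = 2z. -/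
open Complex Real Finset

/-- Discrete Fourier coefficient of the characteristic function of a finite set
`A ⊆ {0, …, N-1}`. -/
noncomputable def finsetFourier (N : ℕ) (A : Finset ℕ) (k : ℤ) : ℂ :=
  (N : ℂ)⁻¹ * ∑ n ∈ Finset.range N,
    (if n ∈ A then (1 : ℂ) else 0) *
      Complex.exp (-(2 * Real.pi * Complex.I * k * n) / N)

/-- The basic root of unity `e^{2πi/N}`. -/
noncomputable def ww (N : ℕ) : ℂ := Complex.exp (2 * Real.pi * Complex.I / N)

/-- Exponential sum of a set. -/
noncomputable def Fm (N : ℕ) (B : Finset ℕ) (k : ℕ) : ℂ := ∑ x ∈ B, ww N ^ (k * x)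

/-- Exponential sum with negated doubled argument. -/
noncomputable def Gm (N : ℕ) (B : Finset ℕ) (k : ℕ) : ℂ :=
  ∑ z ∈ B, ww N ^ (k * (2 * N - 2 * z))

lemma key (N : ℕ) (hN : 0 < N) (m : ℕ) :
    ∑ k ∈ Finset.range N, ww N ^ (k * m) = if N ∣ m then (N : ℂ) else 0 := by
  have hprim : IsPrimitiveRoot (ww N) N := Complex.isPrimitiveRoot_exp N hN.ne'
  have hNone : ww N ^ N = 1 := hprim.pow_eq_one
  by_cases h : N ∣ m
  · have h1 : ww N ^ m = 1 := (hprim.pow_eq_one_iff_dvd m).mpr h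
    simp [mul_comm, pow_mul, h1, h]
  · have h1 : ww N ^ m ≠ 1 := fun hh => h ((hprim.pow_eq_one_iff_dvd m).mp hh)
    have h2 : ∑ k ∈ Finset.range N, (ww N ^ m) ^ k = ((ww N ^ m) ^ N - 1) / (ww N ^ m - 1) :=
      geom_sum_eq h1 N
    have h3 : (ww N ^ m) ^ N = 1 := by
      rw [← pow_mul, mul_comm, pow_mul, hNone, one_pow]
    simp only [mul_comm, pow_mul] at *
    rw [h2, h3]
    simp [h]

lemma conj_ww (N : ℕ) (hN : 0 < N) (j : ℕ) :
    (starRingEnd ℂ) (ww N ^ j) = ww N ^ ((N - 1) * j) := by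
  have hN0 : (N : ℂ) ≠ 0 := Nat.cast_ne_zero.mpr hN.ne'
  have h1 : (starRingEnd ℂ) (ww N) = ww N ^ (N - 1) := by
    have e1 : (starRingEnd ℂ) (ww N) = Complex.exp (-(2 * Real.pi * Complex.I / N)) := by
      rw [ww, ← Complex.exp_conj]
      congr 1
      simp [map_div₀, Complex.conj_I, map_ofNat]
      ring
    have e2 : ww N ^ (N - 1) = Complex.exp (-(2 * Real.pi * Complex.I / N)) := by
      rw [ww, ← Complex.exp_nat_mul, Nat.cast_sub hN, Nat.cast_one]
      have : ((N : ℂ) - 1) * (2 * Real.pi * Complex.I / N) =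
          2 * Real.pi * Complex.I + -(2 * Real.pi * Complex.I / N) := by
        field_simp
        ring
      rw [this, Complex.exp_add, Complex.exp_two_pi_mul_I, one_mul]
    rw [e1, e2]
  rw [map_pow, h1, ← pow_mul]

lemma parseval (N : ℕ) (hN : 0 < N) (B : Finset ℕ) (f : ℕ → ℕ)
    (hf : ∀ n ∈ B, ∀ m ∈ B, (N ∣ f n + (N - 1) * f m ↔ n = m)) :
    ∑ k ∈ Finset.range N, norm (∑ n ∈ B, ww N ^ (k * f n)) ^ 2
      = (N : ℝ) * B.card := by
  have hc : ∑ k ∈ Finset.range N,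
      (∑ n ∈ B, ww N ^ (k * f n)) * (starRingEnd ℂ) (∑ n ∈ B, ww N ^ (k * f n))
      = (N : ℂ) * B.card := by
    have hterm : ∀ k, (∑ n ∈ B, ww N ^ (k * f n)) * (starRingEnd ℂ) (∑ n ∈ B, ww N ^ (k * f n))
        = ∑ n ∈ B, ∑ m ∈ B, ww N ^ (k * (f n + (N - 1) * f m)) := by
      intro k
      rw [map_sum, Finset.sum_mul_sum]
      refine Finset.sum_congr rfl fun n _ => Finset.sum_congr rfl fun m _ => ?_
      rw [conj_ww N hN, ← pow_add]
      congr 1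
      ring
    rw [Finset.sum_congr rfl fun k _ => hterm k, Finset.sum_comm]
    have : ∀ n ∈ B, ∑ k ∈ Finset.range N, ∑ m ∈ B, ww N ^ (k * (f n + (N - 1) * f m))
        = (N : ℂ) := by
      intro n hn
      rw [Finset.sum_comm]
      have : ∀ m ∈ B, ∑ k ∈ Finset.range N, ww N ^ (k * (f n + (N - 1) * f m))
          = if n = m then (N : ℂ) else 0 := by
        intro m hm
        rw [key N hN, if_congr (hf n hn m hm) rfl rfl]
      rw [Finset.sum_congr rfl this]
      simp [hn]
    rw [Finset.sum_congr rfl this, Finset.sum_const]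
    simp [mul_comm]
  have := hc
  simp only [Complex.mul_conj] at this
  have h2 : ((∑ k ∈ Finset.range N, norm (∑ n ∈ B, ww N ^ (k * f n)) ^ 2 : ℝ) : ℂ)
      = (((N : ℝ) * B.card : ℝ) : ℂ) := by
    push_cast
    rw [← this]
    refine Finset.sum_congr rfl fun k _ => ?_
    norm_cast
    exact Complex.sq_norm _
  exact_mod_cast h2

lemma smallzero (N : ℕ) (d : ℤ) (hd : (N : ℤ) ∣ d) (h1 : -N < d) (h2 : d < N) :
    d = 0 := by
  rcases hd with ⟨c, hc⟩
  subst hc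
  rcases lt_trichotomy c 0 with h | h | h
  · nlinarith [Int.add_one_le_iff.mpr h]
  · simp [h]
  · nlinarith [Int.add_one_le_iff.mpr h]

lemma div1 (N : ℕ) (hN : 0 < N) {n m : ℕ} (hn : n < N) (hm : m < N) :
    N ∣ n + (N - 1) * m ↔ n = m := by
  constructor
  · intro h
    have h' : (N : ℤ) ∣ (n : ℤ) + ((N : ℤ) - 1) * m := by
      have := Int.natCast_dvd_natCast.mpr h
      push_cast [Nat.cast_sub hN] at this
      convert this using 2
    have h2 : (N : ℤ) ∣ (n : ℤ) - m := by
      have e : (n : ℤ) - m = ((n : ℤ) + ((N : ℤ) - 1) * m) - N * m := by ring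
      rw [e]
      exact dvd_sub h' (dvd_mul_right _ _)
    have := smallzero N _ h2 (by omega) (by omega)
    omega
  · intro h
    subst h
    have h1 : 1 ≤ N := hN
    have : n + (N - 1) * n = N * n := by
      calc n + (N - 1) * n = (1 + (N - 1)) * n := by ring
        _ = N * n := by rw [Nat.add_sub_cancel' h1]
    rw [this]
    exact Dvd.intro n rfl

lemma div2 (N : ℕ) (hN : 0 < N) (hodd : Odd N) {n m : ℕ} (hn : n < N) (hm : m < N) :
    N ∣ (2 * N - 2 * n) + (N - 1) * (2 * N - 2 * m) ↔ n = m := by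
  have h2n : 2 * n ≤ 2 * N := by omega
  have h2m : 2 * m ≤ 2 * N := by omega
  constructor
  · intro h
    have h' : (N : ℤ) ∣ (2 * N - 2 * n) + ((N : ℤ) - 1) * (2 * N - 2 * m) := by
      have := Int.natCast_dvd_natCast.mpr h
      push_cast [Nat.cast_sub hN, Nat.cast_sub h2n, Nat.cast_sub h2m] at this
      convert this using 2
    have h2 : (N : ℤ) ∣ 2 * ((m : ℤ) - n) := by
      have e : 2 * ((m : ℤ) - n) =
          ((2 * N - 2 * n) + ((N : ℤ) - 1) * (2 * N - 2 * m)) - N * (2 * N - 2 * m) := by ring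
      rw [e]
      exact dvd_sub h' (dvd_mul_right _ _)
    have h3 : (N : ℤ) ∣ ((m : ℤ) - n) := by
      rcases h2 with ⟨c, hc⟩
      have hev : Even ((N : ℤ) * c) := ⟨(m : ℤ) - n, by omega⟩
      have hoddN : Odd (N : ℤ) := by exact_mod_cast hodd
      rcases Int.even_mul.mp hev with h | h
      · exact absurd h (by simpa using hoddN)
      · rcases h with ⟨c', hc'⟩
        have e : 2 * ((m : ℤ) - n) = 2 * (N * c') := by rw [hc, hc']; ring
        exact ⟨c', by linarith⟩
    have := smallzero N _ h3 (by omega) (by omega)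
    omega
  · intro h
    subst h
    have : (2 * N - 2 * n) + (N - 1) * (2 * N - 2 * n) = N * (2 * N - 2 * n) := by
      calc (2 * N - 2 * n) + (N - 1) * (2 * N - 2 * n)
          = (1 + (N - 1)) * (2 * N - 2 * n) := by ring
        _ = _ := by rw [Nat.add_sub_cancel' hN]
    rw [this]
    exact Dvd.intro _ rfl

lemma count_eq (N : ℕ) (hN : 0 < N) (A M : Finset ℕ) :
    (N : ℂ) * ((((M ×ˢ A) ×ˢ M).filter
        (fun p => N ∣ p.1.1 + p.1.2 + (2 * N - 2 * p.2))).card : ℂ)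
      = ∑ k ∈ Finset.range N, Fm N M k * Fm N A k * Gm N M k := by
  unfold Fm Gm
  have hterm : ∀ k : ℕ,
      (∑ x ∈ M, ww N ^ (k * x)) * (∑ y ∈ A, ww N ^ (k * y)) *
        (∑ z ∈ M, ww N ^ (k * (2 * N - 2 * z)))
      = ∑ p ∈ (M ×ˢ A) ×ˢ M, ww N ^ (k * (p.1.1 + p.1.2 + (2 * N - 2 * p.2))) := by
    intro k
    rw [Finset.sum_mul_sum M A (fun x => ww N ^ (k * x)) (fun y => ww N ^ (k * y))]
    rw [show (∑ x ∈ M, ∑ y ∈ A, ww N ^ (k * x) * ww N ^ (k * y))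
        = ∑ q ∈ M ×ˢ A, ww N ^ (k * q.1) * ww N ^ (k * q.2) from
      (Finset.sum_product (s := M) (t := A)
        (f := fun q => ww N ^ (k * q.1) * ww N ^ (k * q.2))).symm]
    rw [Finset.sum_mul_sum (M ×ˢ A) M
      (fun q => ww N ^ (k * q.1) * ww N ^ (k * q.2)) (fun z => ww N ^ (k * (2 * N - 2 * z)))]
    rw [Finset.sum_product (s := M ×ˢ A) (t := M)
      (f := fun p => ww N ^ (k * (p.1.1 + p.1.2 + (2 * N - 2 * p.2))))]
    refine Finset.sum_congr rfl fun q _ => Finset.sum_congr rfl fun z _ => ?_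
    rw [← pow_add, ← pow_add]
    congr 1
    ring
  rw [Finset.sum_congr rfl fun k _ => hterm k, Finset.sum_comm]
  have : ∀ p ∈ (M ×ˢ A) ×ˢ M,
      ∑ k ∈ Finset.range N, ww N ^ (k * (p.1.1 + p.1.2 + (2 * N - 2 * p.2)))
      = if N ∣ p.1.1 + p.1.2 + (2 * N - 2 * p.2) then (N : ℂ) else 0 := fun p _ => key N hN _
  rw [Finset.sum_congr rfl this, ← Finset.sum_filter, Finset.sum_const]
  simp [mul_comm]

lemma abs_FA (N : ℕ) (hN : 0 < N) (A : Finset ℕ) (hA : A ⊆ Finset.range N) (k : ℕ) :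
    norm (Fm N A k)
      = (N : ℝ) * norm (finsetFourier N A k) := by
  unfold Fm
  have h1 : finsetFourier N A k = (N : ℂ)⁻¹ * ∑ y ∈ A, (starRingEnd ℂ) (ww N ^ (k * y)) := by
    rw [finsetFourier]
    congr 1
    have e1 : ∀ n ∈ Finset.range N,
        (if n ∈ A then (1 : ℂ) else 0) *
          Complex.exp (-(2 * Real.pi * Complex.I * (k : ℤ) * n) / N)
        = if n ∈ A then Complex.exp (-(2 * Real.pi * Complex.I * (k : ℤ) * n) / N) else 0 := by
      intro n _
      split <;> simp
    rw [Finset.sum_congr rfl e1, Finset.sum_ite_mem, Finset.inter_eq_right.mpr hA]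
    refine Finset.sum_congr rfl fun y _ => ?_
    rw [ww, ← Complex.exp_nat_mul, ← Complex.exp_conj]
    congr 1
    simp [map_div₀, Complex.conj_I, map_ofNat]
    ring
  rw [h1]
  rw [norm_mul, norm_inv, ← map_sum (starRingEnd ℂ)]
  rw [Complex.norm_conj]
  simp [Complex.norm_natCast]
  have hN0 : (N : ℝ) ≠ 0 := Nat.cast_ne_zero.mpr hN.ne'
  field_simp

/-- A set `A ⊆ {0,…,N-1}` of size `δN^α` (α > 1/2) whose middle third is substantial
and whose nonzero Fourier coefficients are all at most `δ²N^{2α-2-ε}/32` contains a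
nontrivial 3-term arithmetic progression. -/
theorem uniform_set_has_3AP (N : ℕ) (α δ ε : ℝ)
    (hα₁ : 1/2 < α) (hα₂ : α ≤ 1) (hδ : 0 < δ) (hε : 0 ≤ ε)
    (hN : 0 < N) (hodd : Odd N)
    (hNlarge : 32 / δ ^ 2 < (N : ℝ) ^ (2 * α - 1))
    (A : Finset ℕ) (hA : A ⊆ Finset.range N)
    (hcard : (A.card : ℝ) = δ * (N : ℝ) ^ α)
    (M : Finset ℕ)
    (hM : M = A.filter (fun n : ℕ => (N : ℝ) / 3 ≤ (n : ℝ) ∧ (n : ℝ) < 2 * (N : ℝ) / 3))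
    (hMcard : δ / 4 * (N : ℝ) ^ α ≤ (M.card : ℝ))
    (hFourier : ∀ k : ℕ, 1 ≤ k → k ≤ N - 1 →
      ‖finsetFourier N A k‖ ≤ δ ^ 2 / 32 * (N : ℝ) ^ (2 * α - 2 - ε)) :
    ∃ x ∈ A, ∃ y ∈ A, ∃ z ∈ A, x + y = 2 * z ∧ ¬(x = y ∧ y = z) := by
  classical
  have hNR : (0 : ℝ) < N := Nat.cast_pos.mpr hN
  have hNR1 : (1 : ℝ) ≤ N := by exact_mod_cast hN
  have hMA : M ⊆ A := by rw [hM]; exact Finset.filter_subset _ _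
  have hMrange : M ⊆ Finset.range N := hMA.trans hA
  have hMlt : ∀ n ∈ M, n < N := fun n hn => Finset.mem_range.mp (hMrange hn)
  have hAlt : ∀ n ∈ A, n < N := fun n hn => Finset.mem_range.mp (hA hn)
  set S := ((M ×ˢ A) ×ˢ M).filter
      (fun p => N ∣ p.1.1 + p.1.2 + (2 * N - 2 * p.2)) with hS
  -- Parseval identities
  have PM : ∑ k ∈ Finset.range N, norm (Fm N M k) ^ 2 = (N : ℝ) * M.card := by
    have := parseval N hN M (fun n => n)
      (fun n hn m hm => div1 N hN (hMlt n hn) (hMlt m hm))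
    simpa [Fm] using this
  have PG : ∑ k ∈ Finset.range N, norm (Gm N M k) ^ 2 = (N : ℝ) * M.card := by
    have := parseval N hN M (fun n => 2 * N - 2 * n)
      (fun n hn m hm => div2 N hN hodd (hMlt n hn) (hMlt m hm))
    simpa [Gm] using this
  -- Cauchy-Schwarz
  have CS : ∑ k ∈ Finset.range N, norm (Fm N M k) * norm (Gm N M k)
      ≤ (N : ℝ) * M.card := by
    have h1 := Finset.sum_mul_sq_le_sq_mul_sq (Finset.range N)
      (fun k => norm (Fm N M k)) (fun k => norm (Gm N M k))
    rw [PM, PG] at h1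
    have hs : 0 ≤ ∑ k ∈ Finset.range N, norm (Fm N M k) * norm (Gm N M k) :=
      Finset.sum_nonneg fun k _ => mul_nonneg (norm_nonneg _) (norm_nonneg _)
    have hNM : (0 : ℝ) ≤ (N : ℝ) * M.card := by positivity
    nlinarith
  -- split off k = 0
  have hsplit : Finset.range N = insert 0 (Finset.Ico 1 N) := by
    ext a; simp [Finset.mem_Ico]; omega
  have h0 : (0 : ℕ) ∉ Finset.Ico 1 N := by simp
  have F0M : Fm N M 0 = (M.card : ℂ) := by simp [Fm]
  have F0A : Fm N A 0 = (A.card : ℂ) := by simp [Fm]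
  have F0G : Gm N M 0 = (M.card : ℂ) := by simp [Gm]
  have hid : (N : ℂ) * (S.card : ℂ)
      = (M.card : ℂ) * A.card * M.card
        + ∑ k ∈ Finset.Ico 1 N, Fm N M k * Fm N A k * Gm N M k := by
    rw [hS, count_eq N hN A M, hsplit, Finset.sum_insert h0, F0M, F0A, F0G]
  -- bound on the Fourier coefficients of A, for 1 ≤ k < N
  set B : ℝ := (N : ℝ) * (δ ^ 2 / 32 * (N : ℝ) ^ (2 * α - 2 - ε)) with hBdef
  have hB0 : 0 ≤ B := by positivity
  have hBk : ∀ k ∈ Finset.Ico 1 N, norm (Fm N A k) ≤ B := by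
    intro k hk
    rw [Finset.mem_Ico] at hk
    rw [abs_FA N hN A hA k]
    exact mul_le_mul_of_nonneg_left (hFourier k hk.1 (by omega)) hNR.le
  -- bound the error term
  have hE : norm (∑ k ∈ Finset.Ico 1 N, Fm N M k * Fm N A k * Gm N M k)
      ≤ B * ((N : ℝ) * M.card) := by
    refine le_trans (norm_sum_le _ _) ?_
    have step : ∀ k ∈ Finset.Ico 1 N,
        norm (Fm N M k * Fm N A k * Gm N M k)
          ≤ B * (norm (Fm N M k) * norm (Gm N M k)) := by
      intro k hk
      rw [norm_mul, norm_mul]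
      have h2 : (0 : ℝ) ≤ norm (Fm N M k) * norm (Gm N M k) :=
        mul_nonneg (norm_nonneg _) (norm_nonneg _)
      have e : norm (Fm N M k) * norm (Fm N A k) * norm (Gm N M k)
          = norm (Fm N A k) * (norm (Fm N M k) * norm (Gm N M k)) := by
        ring
      rw [e]
      exact mul_le_mul_of_nonneg_right (hBk k hk) h2
    refine le_trans (Finset.sum_le_sum step) ?_
    rw [← Finset.mul_sum]
    refine mul_le_mul_of_nonneg_left ?_ hB0
    refine le_trans (Finset.sum_le_sum_of_subset_of_nonneg ?_ fun k _ _ =>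
      mul_nonneg (norm_nonneg _) (norm_nonneg _)) CS
    intro k hk
    rw [Finset.mem_Ico] at hk
    exact Finset.mem_range.mpr hk.2
  -- real form of the identity
  have hreal : |(N : ℝ) * S.card - (M.card : ℝ) * A.card * M.card|
      ≤ B * ((N : ℝ) * M.card) := by
    have e1 : (((N : ℝ) * S.card - (M.card : ℝ) * A.card * M.card : ℝ) : ℂ)
        = ∑ k ∈ Finset.Ico 1 N, Fm N M k * Fm N A k * Gm N M k := by
      rw [← sub_eq_iff_eq_add'] at hid
      rw [← hid]
      push_cast
      ring
    have e2 := congrArg norm e1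
    rw [Complex.norm_real, Real.norm_eq_abs] at e2
    rw [e2]
    exact hE
  -- numeric estimates
  have hNa : (0 : ℝ) < (N : ℝ) ^ α := Real.rpow_pos_of_pos hNR α
  have hMc0 : (0 : ℝ) < M.card := lt_of_lt_of_le (by positivity) hMcard
  have hBN : B * (N : ℝ) ≤ δ ^ 2 / 32 * (N : ℝ) ^ (2 * α) := by
    have e1 : B * (N : ℝ) = δ ^ 2 / 32 * ((N : ℝ) ^ (2 * α - 2 - ε) * (N : ℝ) ^ (2 : ℝ)) := by
      rw [hBdef]
      rw [show ((N : ℝ) ^ (2 : ℝ)) = (N : ℝ) * (N : ℝ) by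
        rw [show (2 : ℝ) = (1 : ℝ) + 1 by norm_num, Real.rpow_add hNR, Real.rpow_one]]
      ring
    rw [e1, ← Real.rpow_add hNR]
    refine mul_le_mul_of_nonneg_left ?_ (by positivity)
    exact Real.rpow_le_rpow_of_exponent_le hNR1 (by linarith)
  have hAM : δ ^ 2 / 4 * (N : ℝ) ^ (2 * α) ≤ (A.card : ℝ) * M.card := by
    have e1 : (N : ℝ) ^ α * (N : ℝ) ^ α = (N : ℝ) ^ (2 * α) := by
      rw [← Real.rpow_add hNR]; ring_nf
    calc δ ^ 2 / 4 * (N : ℝ) ^ (2 * α) = (δ * (N : ℝ) ^ α) * (δ / 4 * (N : ℝ) ^ α) := by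
          rw [← e1]; ring
      _ ≤ (A.card : ℝ) * M.card := by
          rw [hcard]
          refine mul_le_mul_of_nonneg_left hMcard (by positivity)
  have hP : 32 < δ ^ 2 * (N : ℝ) ^ (2 * α - 1) := by
    rw [div_lt_iff₀ (by positivity)] at hNlarge
    linarith
  have hpow : (N : ℝ) ^ (2 * α) = (N : ℝ) ^ (2 * α - 1) * N := by
    have h := Real.rpow_add hNR (2 * α - 1) 1
    rw [Real.rpow_one] at h
    have e : 2 * α - 1 + 1 = 2 * α := by ring
    rw [e] at h
    exact h
  -- conclude S.card > M.card
  have hSM : (M.card : ℝ) < S.card := by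
    have k1 : (M.card : ℝ) * (δ ^ 2 / 4 * (N : ℝ) ^ (2 * α))
        ≤ (M.card : ℝ) * ((A.card : ℝ) * M.card) :=
      mul_le_mul_of_nonneg_left hAM hMc0.le
    have k2 : B * (N : ℝ) * M.card ≤ δ ^ 2 / 32 * (N : ℝ) ^ (2 * α) * M.card :=
      mul_le_mul_of_nonneg_right hBN hMc0.le
    have e1 : (M.card : ℝ) * ((A.card : ℝ) * M.card) = (M.card : ℝ) * A.card * M.card := by
      ring
    have e2 : B * ((N : ℝ) * M.card) = B * (N : ℝ) * M.card := by ring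
    have k3 : (M.card : ℝ) * (δ ^ 2 / 4 * (N : ℝ) ^ (2 * α))
        - δ ^ 2 / 32 * (N : ℝ) ^ (2 * α) * M.card ≤ (N : ℝ) * S.card := by
      have h := (abs_le.mp hreal).1
      linarith
    have k4 : (M.card : ℝ) * (δ ^ 2 / 4 * (N : ℝ) ^ (2 * α))
        - δ ^ 2 / 32 * (N : ℝ) ^ (2 * α) * M.card
        = (M.card : ℝ) * (7 / 32) * (δ ^ 2 * (N : ℝ) ^ (2 * α - 1)) * N := by
      rw [hpow]; ring
    have k5 : (M.card : ℝ) * (7 / 32) * 32 * N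
        < (M.card : ℝ) * (7 / 32) * (δ ^ 2 * (N : ℝ) ^ (2 * α - 1)) * N := by
      have e4 : (M.card : ℝ) * (7 / 32) * (δ ^ 2 * (N : ℝ) ^ (2 * α - 1)) * N
          - (M.card : ℝ) * (7 / 32) * 32 * N
          = 7 / 32 * ((M.card : ℝ) * N) * (δ ^ 2 * (N : ℝ) ^ (2 * α - 1) - 32) := by ring
      have e5 : (0 : ℝ) < 7 / 32 * ((M.card : ℝ) * N) * (δ ^ 2 * (N : ℝ) ^ (2 * α - 1) - 32) :=
        mul_pos (mul_pos (by norm_num) (mul_pos hMc0 hNR)) (sub_pos.mpr hP)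
      linarith
    have k6 : 7 * ((M.card : ℝ) * N) < (N : ℝ) * S.card := by
      have e3 : (M.card : ℝ) * (7 / 32) * 32 * N = 7 * ((M.card : ℝ) * N) := by ring
      linarith
    have hMN : (0 : ℝ) ≤ (M.card : ℝ) * N := by positivity
    have k7 : (N : ℝ) * M.card < (N : ℝ) * S.card := by linarith
    exact (mul_lt_mul_iff_right₀ hNR).mp k7
  have hSMnat : M.card < S.card := by exact_mod_cast hSM
  -- extract a nontrivial triple
  set D : Finset ((ℕ × ℕ) × ℕ) := M.image (fun x => ((x, x), x)) with hD
  have hDcard : D.card ≤ M.card := Finset.card_image_le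
  have hex : ∃ p ∈ S, p ∉ D := by
    by_contra hcon
    push_neg at hcon
    have hsub : S ⊆ D := fun p hp => hcon p hp
    have := Finset.card_le_card hsub
    omega
  obtain ⟨p, hpS, hpD⟩ := hex
  obtain ⟨⟨x, y⟩, z⟩ := p
  obtain ⟨hpmem, hpdvd⟩ := Finset.mem_filter.mp hpS
  obtain ⟨hpq, hz⟩ := Finset.mem_product.mp hpmem
  obtain ⟨hx, hy⟩ := Finset.mem_product.mp hpq
  simp only at hx hy hz hpdvd
  -- interval information
  have hxI : (N : ℝ) / 3 ≤ (x : ℝ) ∧ (x : ℝ) < 2 * (N : ℝ) / 3 := by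
    have h := hx; rw [hM] at h
    exact (Finset.mem_filter.mp h).2
  have hzI : (N : ℝ) / 3 ≤ (z : ℝ) ∧ (z : ℝ) < 2 * (N : ℝ) / 3 := by
    have h := hz; rw [hM] at h
    exact (Finset.mem_filter.mp h).2
  have hyN : y < N := hAlt y hy
  have hzN : z < N := hMlt z hz
  have h2z : 2 * z ≤ 2 * N := by omega
  -- the divisible quantity is exactly 2N
  have hmR : ((x + y + (2 * N - 2 * z) : ℕ) : ℝ) = (x : ℝ) + y + (2 * N - 2 * (z : ℝ)) := by
    push_cast [Nat.cast_sub h2z]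
    ring
  have hyR : (0 : ℝ) ≤ (y : ℝ) := Nat.cast_nonneg y
  have hyRN : (y : ℝ) < N := by exact_mod_cast hyN
  have hlow : (N : ℝ) < ((x + y + (2 * N - 2 * z) : ℕ) : ℝ) := by
    rw [hmR]; push_cast; linarith [hxI.1, hzI.2]
  have hhigh : ((x + y + (2 * N - 2 * z) : ℕ) : ℝ) < 3 * N := by
    rw [hmR]; push_cast; linarith [hxI.2, hzI.1]
  have hlownat : N < x + y + (2 * N - 2 * z) := by exact_mod_cast hlow
  have hhighnat : x + y + (2 * N - 2 * z) < 3 * N := by exact_mod_cast hhigh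
  obtain ⟨c, hc⟩ := hpdvd
  have hc1 : 1 < c := by
    by_contra h
    push_neg at h
    have h2 : N * c ≤ N * 1 := Nat.mul_le_mul_left N h
    omega
  have hc2 : c < 3 := by
    by_contra h
    push_neg at h
    have h2 : N * 3 ≤ N * c := Nat.mul_le_mul_left N h
    omega
  have hceq : c = 2 := by omega
  have hc' : x + y + (2 * N - 2 * z) = N * 2 := by rw [hc, hceq]
  have hxyz : x + y = 2 * z := by omega
  -- nontriviality
  have hnt : ¬(x = y ∧ y = z) := by
    rintro ⟨h1, h2⟩
    apply hpD
    rw [hD, Finset.mem_image]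
    exact ⟨x, hx, by rw [h1, h2]⟩
  exact ⟨x, hMA hx, y, hy, z, hMA hz, hxyz, hnt⟩
end

section
/- Define subsets of ℕ by C₀ = {1}, C_{i+1} = C_i ∪ {3^{i+1} + 1 − c : c ∈ C_i} for i ∈ ℕ, and C = ⋃_{i=0}^∞ C_i. Then C has fractional density log 2 / log 3: for every β < log 2 / log 3, lim_{N→∞} |C ∩ [1, N]| / N^β = ∞, and for every β > log 2 / log 3, lim_{N→∞} |C ∩ [1, N]| / N^β = 0. -/
open Filter Finset

/-- The finite stages of the triadic Cantor set in `ℕ`: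
`C₀ = {1}`, `C_{i+1} = C_i ∪ {3^{i+1} + 1 − c : c ∈ C_i}`. -/
def cantorStage : ℕ → Finset ℕ
  | 0 => {1}
  | (i + 1) => cantorStage i ∪ (cantorStage i).image (fun c => 3 ^ (i + 1) + 1 - c)

/-- The triadic Cantor set in `ℕ`: `C = ⋃ᵢ Cᵢ`. -/
def natCantor : Set ℕ := ⋃ i : ℕ, (cantorStage i : Set ℕ)


lemma mem_cantorStage_bounds : ∀ {i c : ℕ}, c ∈ cantorStage i → 1 ≤ c ∧ c ≤ 3 ^ i := by
  intro i
  induction i with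
  | zero => intro c h; simp [cantorStage] at h; omega
  | succ i ih =>
    intro c h
    have h3 : (3:ℕ) ^ (i+1) = 3 * 3 ^ i := by ring
    simp only [cantorStage, Finset.mem_union, Finset.mem_image] at h
    rcases h with h | ⟨d, hd, rfl⟩
    · have := ih h; omega
    · have := ih hd; omega

lemma cantorStage_mono : Monotone cantorStage := by
  apply monotone_nat_of_le_succ
  intro i
  simp only [cantorStage]
  exact Finset.subset_union_left

lemma card_cantorStage (i : ℕ) : (cantorStage i).card = 2 ^ i := by
  induction i with
  | zero => rfl
  | succ i ih =>
    have h3 : (3:ℕ) ^ (i+1) = 3 * 3 ^ i := by ring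
    rw [show cantorStage (i+1) = cantorStage i ∪ (cantorStage i).image (fun c => 3 ^ (i + 1) + 1 - c) from rfl,
      Finset.card_union_of_disjoint, Finset.card_image_of_injOn, ih]
    · ring
    · intro a ha b hb hab
      have h1 := mem_cantorStage_bounds ha
      have h2 := mem_cantorStage_bounds hb
      simp only at hab
      omega
    · rw [Finset.disjoint_right]
      intro a ha ha'
      have h1 := mem_cantorStage_bounds ha'
      simp only [Finset.mem_image] at ha
      obtain ⟨d, hd, rfl⟩ := ha
      have h2 := mem_cantorStage_bounds hd
      omega

lemma cantorStage_inter_le : ∀ {j i c : ℕ}, i ≤ j → c ∈ cantorStage j → c ≤ 3 ^ i → c ∈ cantorStage i := by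
  intro j
  induction j with
  | zero =>
    intro i c hij hc _
    obtain rfl : i = 0 := by omega
    exact hc
  | succ j ih =>
    intro i c hij hc hle
    rcases Nat.eq_or_lt_of_le hij with rfl | hlt
    · exact hc
    · have hij' : i ≤ j := by omega
      simp only [cantorStage, Finset.mem_union, Finset.mem_image] at hc
      rcases hc with hc | ⟨d, hd, rfl⟩
      · exact ih hij' hc hle
      · exfalso
        have h1 := mem_cantorStage_bounds hd
        have h3 : (3:ℕ) ^ (j+1) = 3 * 3 ^ j := by ring
        have hpow : (3:ℕ) ^ i ≤ 3 ^ j := Nat.pow_le_pow_right (by norm_num) hij'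
        omega

lemma natCantor_inter_eq (i N : ℕ) (hN : N ≤ 3 ^ i) :
    natCantor ∩ Set.Icc 1 N = ↑((cantorStage i).filter (fun c => c ≤ N)) := by
  ext x
  simp only [natCantor, Set.mem_inter_iff, Set.mem_iUnion, Finset.coe_sort_coe, Set.mem_Icc,
    Finset.coe_filter, Set.mem_setOf_eq, Finset.mem_coe]
  constructor
  · rintro ⟨⟨j, hj⟩, h1, h2⟩
    refine ⟨?_, h2⟩
    rcases le_total j i with h | h
    · exact cantorStage_mono h hj
    · exact cantorStage_inter_le h hj (le_trans h2 hN)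
  · rintro ⟨hx, hxN⟩
    exact ⟨⟨i, hx⟩, (mem_cantorStage_bounds hx).1, hxN⟩

lemma count_bounds (N : ℕ) (hN : 1 ≤ N) :
    2 ^ Nat.log 3 N ≤ Nat.card ↥(natCantor ∩ Set.Icc 1 N) ∧
    Nat.card ↥(natCantor ∩ Set.Icc 1 N) ≤ 2 ^ (Nat.log 3 N + 1) := by
  set i := Nat.log 3 N with hi
  have h1 : 3 ^ i ≤ N := Nat.pow_log_le_self 3 (by omega)
  have h2 : N < 3 ^ (i+1) := Nat.lt_pow_succ_log_self (by norm_num) N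
  have key : Nat.card ↥(natCantor ∩ Set.Icc 1 N)
      = ((cantorStage (i+1)).filter (fun c => c ≤ N)).card := by
    rw [natCantor_inter_eq (i+1) N h2.le, Nat.card_coe_set_eq, Set.ncard_coe_finset]
  rw [key]
  constructor
  · calc 2 ^ i = (cantorStage i).card := (card_cantorStage i).symm
      _ ≤ _ := by
        apply Finset.card_le_card
        intro x hx
        simp only [Finset.mem_filter]
        exact ⟨cantorStage_mono (Nat.le_succ i) hx,
          le_trans (mem_cantorStage_bounds hx).2 h1⟩
  · calc _ ≤ (cantorStage (i+1)).card := Finset.card_filter_le _ _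
      _ = 2 ^ (i+1) := card_cantorStage (i+1)

lemma tendsto_natLog3 : Tendsto (fun N : ℕ => Nat.log 3 N) atTop atTop := by
  apply tendsto_atTop_atTop.mpr
  intro k
  refine ⟨3 ^ k, fun N hN => ?_⟩
  exact Nat.le_log_of_pow_le (by norm_num) hN

/-- The triadic Cantor set in `ℕ` has fractional density `log 2 / log 3`. -/
theorem natCantor_fractional_density :
    (∀ β : ℝ, β < Real.log 2 / Real.log 3 →
      Tendsto (fun N : ℕ => (Nat.card ↥(natCantor ∩ Set.Icc 1 N) : ℝ) / (N : ℝ) ^ β)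
        atTop atTop) ∧
    (∀ β : ℝ, Real.log 2 / Real.log 3 < β →
      Tendsto (fun N : ℕ => (Nat.card ↥(natCantor ∩ Set.Icc 1 N) : ℝ) / (N : ℝ) ^ β)
        atTop (nhds 0)) := by
  have hlog3 : (0:ℝ) < Real.log 3 := Real.log_pos (by norm_num)
  have hlog2 : (0:ℝ) < Real.log 2 := Real.log_pos (by norm_num)
  set α : ℝ := Real.log 2 / Real.log 3 with hα
  have hαpos : 0 < α := div_pos hlog2 hlog3
  have h3α : (3:ℝ) ^ α = 2 := by
    rw [hα, show Real.log 2 / Real.log 3 = Real.logb 3 2 from rfl]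
    exact Real.rpow_logb (by norm_num) (by norm_num) (by norm_num)
  constructor
  · intro β hβ
    set β' := max β 0 with hβ'
    have hβ'0 : 0 ≤ β' := le_max_right _ _
    have hβ'α : β' < α := max_lt hβ hαpos
    have h3β'pos : (0:ℝ) < (3:ℝ) ^ β' := Real.rpow_pos_of_pos (by norm_num) β'
    have hr : (1:ℝ) < 2 / (3:ℝ) ^ β' := by
      rw [lt_div_iff₀ h3β'pos, one_mul, ← h3α]
      exact Real.rpow_lt_rpow_left_iff (by norm_num) |>.mpr hβ'α
    have htend : Tendsto (fun N : ℕ => (3:ℝ) ^ (-β') * (2 / (3:ℝ) ^ β') ^ Nat.log 3 N)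
        atTop atTop := by
      exact Tendsto.const_mul_atTop (Real.rpow_pos_of_pos (by norm_num) (-β'))
        ((tendsto_pow_atTop_atTop_of_one_lt hr).comp tendsto_natLog3)
    apply tendsto_atTop_mono' atTop ?_ htend
    filter_upwards [eventually_ge_atTop 1] with N hN
    set i := Nat.log 3 N with hi
    have hN1 : (1:ℝ) ≤ (N:ℝ) := by exact_mod_cast hN
    have hlow : (2:ℝ) ^ i ≤ (Nat.card ↥(natCantor ∩ Set.Icc 1 N) : ℝ) := by
      exact_mod_cast (count_bounds N hN).1
    have hup : (N:ℝ) ≤ (3:ℝ) ^ (i+1) := by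
      exact_mod_cast (Nat.lt_pow_succ_log_self (by norm_num) N).le
    have e1 : (3:ℝ) ^ (-β') * (2 / (3:ℝ) ^ β') ^ i = (2:ℝ) ^ i / ((3:ℝ) ^ β') ^ (i+1) := by
      rw [div_pow, Real.rpow_neg (by norm_num), pow_succ]
      field_simp
    rw [e1]
    have hd : (N:ℝ) ^ β ≤ ((3:ℝ) ^ β') ^ (i+1) := by
      calc (N:ℝ) ^ β ≤ (N:ℝ) ^ β' :=
            Real.rpow_le_rpow_of_exponent_le hN1 (le_max_left β 0)
        _ ≤ ((3:ℝ) ^ ((i:ℝ)+1)) ^ β' := by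
            apply Real.rpow_le_rpow (by positivity) _ hβ'0
            rw [show ((i:ℝ)+1) = ((i+1 : ℕ) : ℝ) by push_cast; ring, Real.rpow_natCast]
            exact hup
        _ = ((3:ℝ) ^ β') ^ (i+1) := by
            rw [← Real.rpow_natCast ((3:ℝ) ^ β') (i+1), ← Real.rpow_mul (by norm_num),
              ← Real.rpow_mul (by norm_num)]
            push_cast
            ring_nf
    have hNβ : (0:ℝ) < (N:ℝ) ^ β := Real.rpow_pos_of_pos (by linarith) β
    calc (2:ℝ) ^ i / ((3:ℝ) ^ β') ^ (i+1) ≤ (2:ℝ) ^ i / (N:ℝ) ^ β := by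
          gcongr
      _ ≤ _ := by gcongr
  · intro β hβ
    have hβ0 : 0 < β := lt_trans hαpos hβ
    have h3βpos : (0:ℝ) < (3:ℝ) ^ β := Real.rpow_pos_of_pos (by norm_num) β
    have hr0 : (0:ℝ) ≤ 2 / (3:ℝ) ^ β := by positivity
    have hr1 : 2 / (3:ℝ) ^ β < 1 := by
      rw [div_lt_one h3βpos, ← h3α]
      exact Real.rpow_lt_rpow_left_iff (by norm_num) |>.mpr hβ
    have htend : Tendsto (fun N : ℕ => 2 * (2 / (3:ℝ) ^ β) ^ Nat.log 3 N) atTop (nhds 0) := by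
      have := ((tendsto_pow_atTop_nhds_zero_of_lt_one hr0 hr1).comp tendsto_natLog3).const_mul 2
      simpa using this
    apply tendsto_of_tendsto_of_tendsto_of_le_of_le' tendsto_const_nhds htend
    · filter_upwards with N
      positivity
    · filter_upwards [eventually_ge_atTop 1] with N hN
      set i := Nat.log 3 N with hi
      have hN1 : (1:ℝ) ≤ (N:ℝ) := by exact_mod_cast hN
      have hup : (Nat.card ↥(natCantor ∩ Set.Icc 1 N) : ℝ) ≤ (2:ℝ) ^ (i+1) := by
        exact_mod_cast (count_bounds N hN).2
      have hlow : (3:ℝ) ^ (i:ℕ) ≤ (N:ℝ) := by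
        exact_mod_cast Nat.pow_log_le_self 3 (by omega)
      have e2 : (2:ℝ) ^ (i+1) / ((3:ℝ) ^ β) ^ i = 2 * (2 / (3:ℝ) ^ β) ^ i := by
        rw [div_pow, pow_succ]
        field_simp
      rw [← e2]
      have hd : ((3:ℝ) ^ β) ^ i ≤ (N:ℝ) ^ β := by
        calc ((3:ℝ) ^ β) ^ i = ((3:ℝ) ^ (i:ℕ)) ^ β := by
              rw [← Real.rpow_natCast ((3:ℝ) ^ β) i, ← Real.rpow_mul (by norm_num),
                ← Real.rpow_natCast (3:ℝ) i, ← Real.rpow_mul (by norm_num)]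
              ring_nf
          _ ≤ (N:ℝ) ^ β := Real.rpow_le_rpow (by positivity) hlow hβ0.le
      have hdpos : (0:ℝ) < ((3:ℝ) ^ β) ^ i := by positivity
      gcongr
end
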